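/- Let K ⊆ K' be finite simplicial complexes with K' = K ∪ {σ} for a single p-simplex σ, and suppose σ is negative (dim H_{p-1} decreases by 1). Then the p-th harmonic chain groups are equal: Z_p(K) ∩ Z^p(K) = Z_p(K') ∩ Z^p(K'). -/

import Mathlib

/-- Dimension of the homology group `Z/B`, computed as `Z` modulo the part of `B` inside `Z`. -/
noncomputable def homologyDim {V : Type*} [AddCommGroup V] [Module ℝ V]
    (Z B : Submodule ℝ V) : ℕ :=
  Module.finrank ℝ (Z ⧸ (Submodule.comap Z.subtype B))

/-- Let `K' = K ∪ {σ}` for a single negative `p`-simplex `σ`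
(`dim H_{p-1}` decreases by 1).  Then the `p`-th harmonic chain groups of `K` and `K'`
are equal: `Z_p(K) ∩ Z^p(K) = Z_p(K') ∩ Z^p(K')`.  Model as before:
`har_p(K) = ker d1 ⊓ (range d2)ᗮ ⊓ (ℝ∙σ)ᗮ`, `har_p(K') = ker d1 ⊓ (range d2)ᗮ`. -/
theorem stmt9
    {C2 C1 C0 Cm : Type*}
    [NormedAddCommGroup C2] [InnerProductSpace ℝ C2] [FiniteDimensional ℝ C2]
    [NormedAddCommGroup C1] [InnerProductSpace ℝ C1] [FiniteDimensional ℝ C1]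
    [NormedAddCommGroup C0] [InnerProductSpace ℝ C0] [FiniteDimensional ℝ C0]
    [NormedAddCommGroup Cm] [InnerProductSpace ℝ Cm] [FiniteDimensional ℝ Cm]
    (d2 : C2 →ₗ[ℝ] C1) (d1 : C1 →ₗ[ℝ] C0) (d0 : C0 →ₗ[ℝ] Cm)
    (hdd1 : d1 ∘ₗ d2 = 0) (hdd0 : d0 ∘ₗ d1 = 0)
    (σ : C1) (hσ : σ ≠ 0)
    (hcoface : LinearMap.range d2 ≤ (ℝ ∙ σ)ᗮ)
    (hneg : homologyDim (LinearMap.ker d0) (Submodule.map d1 (ℝ ∙ σ)ᗮ) =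
      homologyDim (LinearMap.ker d0) (LinearMap.range d1) + 1) :
    LinearMap.ker d1 ⊓ (LinearMap.range d2)ᗮ ⊓ (ℝ ∙ σ)ᗮ =
      LinearMap.ker d1 ⊓ (LinearMap.range d2)ᗮ := by
  -- It suffices to show `ker d1 ≤ (ℝ ∙ σ)ᗮ`.
  have key : LinearMap.ker d1 ≤ (ℝ ∙ σ)ᗮ := by
    intro z hz
    by_contra hzo
    -- decompose z = a • σ + y with y ⊥ σ
    have hcompl : IsCompl (ℝ ∙ σ) (ℝ ∙ σ)ᗮ :=
      Submodule.isCompl_orthogonal_of_hasOrthogonalProjection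
    have hsup : (ℝ ∙ σ) ⊔ (ℝ ∙ σ)ᗮ = ⊤ := hcompl.sup_eq_top
    have hz' : z ∈ (ℝ ∙ σ) ⊔ (ℝ ∙ σ)ᗮ := by rw [hsup]; trivial
    obtain ⟨s, hs, y, hy, hzy⟩ := Submodule.mem_sup.mp hz'
    obtain ⟨a, rfl⟩ := Submodule.mem_span_singleton.mp hs
    have ha : a ≠ 0 := by
      rintro rfl
      rw [zero_smul, zero_add] at hzy
      exact hzo (hzy ▸ hy)
    -- then d1 σ ∈ map d1 σᗮ
    have hdz : d1 z = 0 := hz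
    have hmem : d1 σ ∈ Submodule.map d1 (ℝ ∙ σ)ᗮ := by
      refine ⟨(-a⁻¹) • y, Submodule.smul_mem _ _ hy, ?_⟩
      have : a • d1 σ + d1 y = 0 := by
        rw [← map_smul, ← map_add, hzy, hdz]
      have h2 : d1 y = -(a • d1 σ) := eq_neg_of_add_eq_zero_right this
      rw [map_smul, h2]
      rw [smul_neg, smul_smul]
      field_simp
      simp
    -- hence range d1 = map d1 σᗮ
    have hrange : Submodule.map d1 (ℝ ∙ σ)ᗮ = LinearMap.range d1 := by
      refine le_antisymm (Submodule.map_le_iff_le_comap.mpr fun x _ => ⟨x, rfl⟩) ?_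
      rintro _ ⟨x, rfl⟩
      have hx : x ∈ (ℝ ∙ σ) ⊔ (ℝ ∙ σ)ᗮ := by rw [hsup]; trivial
      obtain ⟨s, hs, w, hw, rfl⟩ := Submodule.mem_sup.mp hx
      obtain ⟨b, rfl⟩ := Submodule.mem_span_singleton.mp hs
      rw [map_add, map_smul]
      exact Submodule.add_mem _ (Submodule.smul_mem _ _ hmem) ⟨w, hw, rfl⟩
    rw [hrange] at hneg
    omega
  exact le_antisymm inf_le_left (le_inf le_rfl (le_trans inf_le_left key))
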